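/- Let S be a nonempty finite type, P a γ-contractive row-stochastic matrix on S with γ ∈ [0,1), d∞ a stationary distribution of P, g : S → ℝ with 0 ≤ g s ≤ 1, η = ∑_s d∞ s · g s, and let h(s) = ∑_{m=0}^{∞} ((e_s ⬝ P^m) · g − η) be the bias vector (the series converges absolutely). Then h satisfies the Bellman equation h(s) = g(s) − η + ∑_{s'} P(s,s') · h(s') for every s ∈ S, and the normalization ∑_s d∞ s · h(s) = 0. -/
import Mathlib


/-- A probability vector on a finite type: nonnegative entries summing to 1. -/
def IsProbVec {S : Type*} [Fintype S] (d : S → ℝ) : Prop :=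
  (∀ s, 0 ≤ d s) ∧ ∑ s, d s = 1

/-- A row-stochastic matrix: every row is a probability vector. -/
def RowStochastic {S : Type*} [Fintype S] (P : S → S → ℝ) : Prop :=
  ∀ s, IsProbVec (P s)

/-- Row-vector–matrix multiplication: (d ⬝ P) s' = ∑ s, d s · P s s'. -/
def vmul {S : Type*} [Fintype S] (d : S → ℝ) (P : S → S → ℝ) : S → ℝ :=
  fun s' => ∑ s, d s * P s s'

/-- `iter d P m = d ⬝ P^m`. -/
def iter {S : Type*} [Fintype S] (d : S → ℝ) (P : S → S → ℝ) : ℕ → S → ℝ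
  | 0 => d
  | m + 1 => vmul (iter d P m) P

/-- L1 norm of a vector: ‖x‖₁ = ∑ s, |x s|. -/
def l1 {S : Type*} [Fintype S] (x : S → ℝ) : ℝ := ∑ s, |x s|

/-- Dot product x · v = ∑ s, x s · v s. -/
def dot {S : Type*} [Fintype S] (x v : S → ℝ) : ℝ := ∑ s, x s * v s

/-- The point-mass probability vector at `s`. -/
def pm {S : Type*} [DecidableEq S] (s : S) : S → ℝ := fun s' => if s' = s then 1 else 0

/-- γ-contractivity. -/
def Contractive {S : Type*} [Fintype S] (γ : ℝ) (P : S → S → ℝ) : Prop :=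
  ∀ d d' : S → ℝ, IsProbVec d → IsProbVec d' →
    l1 (fun s => vmul d P s - vmul d' P s) ≤ γ * l1 (fun s => d s - d' s)

section Aux

variable {S : Type*} [Fintype S] [DecidableEq S]

lemma pm_prob (s : S) : IsProbVec (pm s) :=
  ⟨fun u => by unfold pm; split <;> norm_num, by simp [pm]⟩

lemma vmul_prob {P : S → S → ℝ} (hP : RowStochastic P) {d : S → ℝ} (hd : IsProbVec d) :
    IsProbVec (vmul d P) := by
  refine ⟨fun u => Finset.sum_nonneg fun t _ => mul_nonneg (hd.1 t) ((hP t).1 u), ?_⟩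
  calc ∑ s', vmul d P s' = ∑ t, d t * ∑ s', P t s' := by
        unfold vmul; rw [Finset.sum_comm]; simp [Finset.mul_sum]
    _ = ∑ t, d t := Finset.sum_congr rfl fun t _ => by rw [(hP t).2, mul_one]
    _ = 1 := hd.2

lemma iter_prob {P : S → S → ℝ} (hP : RowStochastic P) {d : S → ℝ} (hd : IsProbVec d) :
    ∀ m, IsProbVec (iter d P m)
  | 0 => hd
  | m + 1 => vmul_prob hP (iter_prob hP hd m)

lemma iter_stat {P : S → S → ℝ} {d : S → ℝ} (hstat : vmul d P = d) :
    ∀ m, iter d P m = d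
  | 0 => rfl
  | m + 1 => by rw [iter, iter_stat hstat m, hstat]

lemma iter_succ_left {P : S → S → ℝ} (d : S → ℝ) :
    ∀ m, iter d P (m + 1) = iter (vmul d P) P m
  | 0 => rfl
  | m + 1 => by
      show vmul (iter d P (m + 1)) P = vmul (iter (vmul d P) P m) P
      rw [iter_succ_left d m]

lemma iter_linear (P : S → S → ℝ) (d : S → ℝ) :
    ∀ (m : ℕ) (u : S), iter d P m u = ∑ t, d t * iter (pm t) P m u
  | 0, u => by simp [iter, pm, mul_ite]
  | m + 1, u => by
      show ∑ x, iter d P m x * P x u = ∑ t, d t * (∑ x, iter (pm t) P m x * P x u)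
      simp only [iter_linear P d m]
      calc ∑ x, (∑ t, d t * iter (pm t) P m x) * P x u
          = ∑ x, ∑ t, d t * (iter (pm t) P m x * P x u) := by
            simp [Finset.sum_mul, mul_assoc]
        _ = ∑ t, d t * ∑ x, iter (pm t) P m x * P x u := by
            rw [Finset.sum_comm]; simp [Finset.mul_sum]

lemma vmul_pm (P : S → S → ℝ) (s : S) : vmul (pm s) P = P s := by
  funext u; simp [vmul, pm, ite_mul]

lemma abs_dot_le {g : S → ℝ} (hg : ∀ s, |g s| ≤ 1) (x : S → ℝ) : |dot x g| ≤ l1 x := by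
  refine (Finset.abs_sum_le_sum_abs _ _).trans (Finset.sum_le_sum fun s _ => ?_)
  rw [abs_mul]
  exact mul_le_of_le_one_right (abs_nonneg _) (hg s)

lemma contract_iter {P : S → S → ℝ} {γ : ℝ} (hγ0 : 0 ≤ γ) (hP : RowStochastic P)
    (hc : Contractive γ P) {d d' : S → ℝ} (hd : IsProbVec d) (hd' : IsProbVec d') :
    ∀ m, l1 (fun u => iter d P m u - iter d' P m u) ≤ γ ^ m * l1 (fun u => d u - d' u)
  | 0 => by simp [iter]
  | m + 1 => by
      have h1 := hc _ _ (iter_prob hP hd m) (iter_prob hP hd' m)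
      have h2 := contract_iter hγ0 hP hc hd hd' m
      calc l1 (fun u => iter d P (m+1) u - iter d' P (m+1) u)
          ≤ γ * l1 (fun u => iter d P m u - iter d' P m u) := h1
        _ ≤ γ * (γ ^ m * l1 (fun u => d u - d' u)) := by
            exact mul_le_mul_of_nonneg_left h2 hγ0
        _ = γ ^ (m+1) * l1 (fun u => d u - d' u) := by ring

end Aux

/-- the bias vector h(s) = ∑_{m≥0} ((e_s ⬝ P^m)·g − η), where
η = d∞ · g, satisfies the Bellman equation h(s) = g(s) − η + ∑_{s'} P(s,s')·h(s')
and the normalization ∑_s d∞(s)·h(s) = 0. -/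
theorem stmt_7 {S : Type*} [Fintype S] [Nonempty S] [DecidableEq S]
    (P : S → S → ℝ) (γ : ℝ) (hγ0 : 0 ≤ γ) (hγ1 : γ < 1)
    (hP : RowStochastic P) (hc : Contractive γ P)
    (dinf : S → ℝ) (hdinf : IsProbVec dinf) (hstat : vmul dinf P = dinf)
    (g : S → ℝ) (hg : ∀ s, 0 ≤ g s ∧ g s ≤ 1)
    (η : ℝ) (hη : η = ∑ s, dinf s * g s)
    (h : S → ℝ) (hh : ∀ s, h s = ∑' m : ℕ, (dot (iter (pm s) P m) g - η)) :
    (∀ s, h s = g s - η + ∑ s', P s s' * h s') ∧ (∑ s, dinf s * h s = 0) := by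
  have hgabs : ∀ s, |g s| ≤ 1 := fun s => abs_le.mpr ⟨by linarith [(hg s).1], (hg s).2⟩
  set a : S → ℕ → ℝ := fun s m => dot (iter (pm s) P m) g - η with ha
  -- bound on the terms
  have hbound : ∀ s m, |a s m| ≤ 2 * γ ^ m := by
    intro s m
    have h1 : a s m = dot (fun u => iter (pm s) P m u - dinf u) g := by
      simp only [ha, hη, dot, sub_mul, Finset.sum_sub_distrib]
    rw [h1]
    have h2 := abs_dot_le hgabs (fun u => iter (pm s) P m u - dinf u)
    have h3 : l1 (fun u => iter (pm s) P m u - dinf u) ≤ γ ^ m * l1 (fun u => pm s u - dinf u) := by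
      have := contract_iter hγ0 hP hc (pm_prob s) hdinf m
      rwa [iter_stat hstat m] at this
    have h4 : l1 (fun u => pm s u - dinf u) ≤ 2 := by
      have : ∀ u ∈ Finset.univ, |pm s u - dinf u| ≤ pm s u + dinf u := fun u _ => by
        have := (pm_prob s).1 u; have := hdinf.1 u
        rw [abs_sub_le_iff]; constructor <;> linarith
      calc l1 (fun u => pm s u - dinf u) ≤ ∑ u, (pm s u + dinf u) :=
            Finset.sum_le_sum this
        _ = 2 := by rw [Finset.sum_add_distrib, (pm_prob s).2, hdinf.2]; norm_num
    calc |dot (fun u => iter (pm s) P m u - dinf u) g|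
        ≤ γ ^ m * l1 (fun u => pm s u - dinf u) := h2.trans h3
      _ ≤ γ ^ m * 2 := mul_le_mul_of_nonneg_left h4 (pow_nonneg hγ0 m)
      _ = 2 * γ ^ m := by ring
  have hsum : ∀ s, Summable (fun m => a s m) := by
    intro s
    apply Summable.of_abs
    exact Summable.of_nonneg_of_le (fun m => abs_nonneg _) (hbound s)
      ((summable_geometric_of_lt_one hγ0 hγ1).mul_left 2)
  -- recursion for a
  have hrec : ∀ s m, a s (m + 1) = ∑ t, P s t * a t m := by
    intro s m
    have h1 : dot (iter (pm s) P (m + 1)) g = ∑ t, P s t * dot (iter (pm t) P m) g := by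
      rw [iter_succ_left, vmul_pm]
      unfold dot
      calc ∑ u, iter (P s) P m u * g u
          = ∑ u, (∑ t, P s t * iter (pm t) P m u) * g u := by
            simp only [iter_linear P (P s)]
        _ = ∑ u, ∑ t, P s t * (iter (pm t) P m u * g u) := by
            simp [Finset.sum_mul, mul_assoc]
        _ = ∑ t, P s t * ∑ u, iter (pm t) P m u * g u := by
            rw [Finset.sum_comm]; simp [Finset.mul_sum]
    simp only [ha, h1, mul_sub, Finset.sum_sub_distrib, ← Finset.sum_mul, (hP s).2, one_mul]
  refine ⟨fun s => ?_, ?_⟩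
  · rw [hh s, Summable.tsum_eq_zero_add (hsum s)]
    have h0 : a s 0 = g s - η := by simp [ha, dot, pm, iter, ite_mul]
    have h1 : ∑' m : ℕ, a s (m + 1) = ∑ t, P s t * h t := by
      calc ∑' m : ℕ, a s (m + 1) = ∑' m : ℕ, ∑ t, P s t * a t m := by
            simp only [hrec]
        _ = ∑ t, ∑' m : ℕ, P s t * a t m :=
            Summable.tsum_finsetSum (fun t _ => (hsum t).mul_left _)
        _ = ∑ t, P s t * h t := by
            refine Finset.sum_congr rfl fun t _ => ?_
            rw [tsum_mul_left, ← hh t]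
    rw [h0, h1]
  · have hz : ∀ m, ∑ s, dinf s * a s m = 0 := by
      intro m
      have h1 : ∑ s, dinf s * dot (iter (pm s) P m) g = η := by
        unfold dot
        calc ∑ s, dinf s * ∑ u, iter (pm s) P m u * g u
            = ∑ s, ∑ u, dinf s * iter (pm s) P m u * g u := by
              simp [Finset.mul_sum, mul_assoc]
          _ = ∑ u, (∑ s, dinf s * iter (pm s) P m u) * g u := by
              rw [Finset.sum_comm]; simp [Finset.sum_mul]
          _ = ∑ u, iter dinf P m u * g u := by
              simp only [← iter_linear]
          _ = η := by rw [iter_stat hstat m, hη]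
      simp only [ha, mul_sub, Finset.sum_sub_distrib, h1, ← Finset.sum_mul, hdinf.2, one_mul,
        sub_self]
    calc ∑ s, dinf s * h s = ∑ s, ∑' m : ℕ, dinf s * a s m := by
          refine Finset.sum_congr rfl fun s _ => ?_
          rw [hh s, ← tsum_mul_left]
      _ = ∑' m : ℕ, ∑ s, dinf s * a s m :=
          (Summable.tsum_finsetSum (fun s _ => (hsum s).mul_left _)).symm
      _ = 0 := by simp [hz]
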